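/- (Euclidean superlinear step estimate) Let φ : ℝⁿ → ℝ be C¹ with grad φ semismooth of order μ at a point x* where grad φ(x*) = 0 and every H ∈ ∂(grad φ)(x*) is positive definite. Then there exist c, δ > 0 such that for all x ∈ B_δ(x*) and H ∈ ∂(grad φ)(x), ‖x − H⁻¹ grad φ(x) − x*‖ ≤ c ‖x − x*‖^{1+μ}. -/
import Mathlib

open scoped RealInnerProductSpace

private lemma coercive_aux {E : Type*} [NormedAddCommGroup E] [InnerProductSpace ℝ E]
    [FiniteDimensional ℝ E]
    (DG : Set (E →L[ℝ] E)) (hcompact : IsCompact DG) (hne : DG.Nonempty)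
    (hposdef : ∀ H ∈ DG, ∀ ξ : E, ξ ≠ 0 → 0 < ⟪ξ, H ξ⟫) :
    ∃ lam > 0, ∀ H' ∈ DG, ∀ ξ : E, lam * ‖ξ‖^2 ≤ ⟪ξ, H' ξ⟫ := by
  rcases subsingleton_or_nontrivial E with hE | hE
  · refine ⟨1, one_pos, fun H' _ ξ => ?_⟩
    have : ξ = 0 := Subsingleton.elim _ _
    simp [this]
  · have hK : IsCompact (DG ×ˢ Metric.sphere (0:E) 1) :=
      hcompact.prod (isCompact_sphere 0 1)
    have hKne : (DG ×ˢ Metric.sphere (0:E) 1).Nonempty :=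
      hne.prod (NormedSpace.sphere_nonempty.mpr zero_le_one)
    have hcont : ContinuousOn (fun p : (E →L[ℝ] E) × E => ⟪p.2, p.1 p.2⟫)
        (DG ×ˢ Metric.sphere (0:E) 1) := by
      apply Continuous.continuousOn
      exact continuous_snd.inner (isBoundedBilinearMap_apply.continuous)
    obtain ⟨p, hpK, hpmin'⟩ := hK.exists_isMinOn hKne hcont
    have hpmin : ∀ q ∈ DG ×ˢ Metric.sphere (0:E) 1, ⟪p.2, p.1 p.2⟫ ≤ ⟪q.2, q.1 q.2⟫ :=
      fun q hq => hpmin' hq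
    have hp2 : ‖p.2‖ = 1 := by simpa using hpK.2
    have hp2ne : p.2 ≠ 0 := by intro h; rw [h] at hp2; simp at hp2
    refine ⟨⟪p.2, p.1 p.2⟫, hposdef p.1 hpK.1 p.2 hp2ne, fun H' hH' ξ => ?_⟩
    rcases eq_or_ne ξ 0 with rfl | hξ
    · simp
    · set u := ‖ξ‖⁻¹ • ξ with hu
      have hnu : ‖u‖ = 1 := by
        rw [hu, norm_smul]; simp [norm_ne_zero_iff.mpr hξ]
      have hmin := hpmin (H', u) ⟨hH', by simpa using hnu⟩
      have hexp : ⟪u, H' u⟫ = ‖ξ‖⁻¹ * (‖ξ‖⁻¹ * ⟪ξ, H' ξ⟫) := by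
        simp [hu, real_inner_smul_left, real_inner_smul_right, map_smul]
      have hξpos : (0:ℝ) < ‖ξ‖ := norm_pos_iff.mpr hξ
      have key : ⟪ξ, H' ξ⟫ = ⟪u, H' u⟫ * ‖ξ‖^2 := by
        rw [hexp, pow_two]; field_simp
      have hmin2 : ⟪p.2, p.1 p.2⟫ ≤ ⟪u, H' u⟫ := by simpa using hmin
      calc ⟪p.2, p.1 p.2⟫ * ‖ξ‖^2 ≤ ⟪u, H' u⟫ * ‖ξ‖^2 :=
            mul_le_mul_of_nonneg_right hmin2 (sq_nonneg _)
        _ = ⟪ξ, H' ξ⟫ := key.symm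

theorem stmt_15
    {E : Type*} [NormedAddCommGroup E] [InnerProductSpace ℝ E] [FiniteDimensional ℝ E]
    (G : E → E) (DG : E → Set (E →L[ℝ] E)) (xs : E)
    (μ : ℝ) (hμ : 0 ≤ μ)
    (hG0 : G xs = 0)
    (hne : (DG xs).Nonempty)
    (hcompact : IsCompact (DG xs))
    (hsym : ∀ x : E, ∀ H ∈ DG x, ∀ u v : E, ⟪H u, v⟫ = ⟪u, H v⟫)
    (hposdef : ∀ H ∈ DG xs, ∀ ξ : E, ξ ≠ 0 → 0 < ⟪ξ, H ξ⟫)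
    (husc : ∀ ε > 0, ∃ δ > 0, ∀ x ∈ Metric.ball xs δ, ∀ H ∈ DG x,
      ∃ H' ∈ DG xs, ‖H - H'‖ ≤ ε)
    (hss : ∀ ε > 0, ∃ δ > 0, ∀ y ∈ Metric.ball xs δ, ∀ H ∈ DG y,
      ‖G xs - G y - H (xs - y)‖ ≤ ε * ‖xs - y‖ ^ (1 + μ)) :
    ∃ c > 0, ∃ δ > 0, ∀ x ∈ Metric.ball xs δ, ∀ H ∈ DG x,
      ∃ Hinv : E →L[ℝ] E, (∀ v, Hinv (H v) = v ∧ H (Hinv v) = v) ∧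
        ‖x - Hinv (G x) - xs‖ ≤ c * ‖x - xs‖ ^ (1 + μ) := by
  obtain ⟨lam, hlam, hcoer⟩ := coercive_aux (DG xs) hcompact hne hposdef
  obtain ⟨δ₁, hδ₁, h1⟩ := husc (lam/2) (by positivity)
  obtain ⟨δ₂, hδ₂, h2⟩ := hss 1 one_pos
  refine ⟨2/lam, by positivity, min δ₁ δ₂, lt_min hδ₁ hδ₂, fun x hx H hH => ?_⟩
  have hx1 : x ∈ Metric.ball xs δ₁ := Metric.ball_subset_ball (min_le_left _ _) hx
  have hx2 : x ∈ Metric.ball xs δ₂ := Metric.ball_subset_ball (min_le_right _ _) hx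
  obtain ⟨H', hH', hHH'⟩ := h1 x hx1 H hH
  -- lower bound: ‖H ξ‖ ≥ (lam/2) ‖ξ‖
  have hlb : ∀ ξ : E, lam/2 * ‖ξ‖ ≤ ‖H ξ‖ := by
    intro ξ
    rcases eq_or_ne ξ 0 with rfl | hξ
    · simp
    · have hξpos : (0:ℝ) < ‖ξ‖ := norm_pos_iff.mpr hξ
      have c1 : lam * ‖ξ‖^2 ≤ ⟪ξ, H' ξ⟫ := hcoer H' hH' ξ
      have c2 : ⟪ξ, H' ξ⟫ = ⟪ξ, H ξ⟫ - ⟪ξ, (H - H') ξ⟫ := by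
        simp [ContinuousLinearMap.sub_apply, inner_sub_right]
      have c3 : ⟪ξ, H ξ⟫ ≤ ‖ξ‖ * ‖H ξ‖ := real_inner_le_norm _ _
      have c4 : |⟪ξ, (H - H') ξ⟫| ≤ ‖H - H'‖ * ‖ξ‖^2 := by
        calc |⟪ξ, (H - H') ξ⟫| ≤ ‖ξ‖ * ‖(H - H') ξ‖ := abs_real_inner_le_norm _ _
          _ ≤ ‖ξ‖ * (‖H - H'‖ * ‖ξ‖) :=
              mul_le_mul_of_nonneg_left ((H - H').le_opNorm ξ) (norm_nonneg _)
          _ = ‖H - H'‖ * ‖ξ‖^2 := by ring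
      have c5 : -⟪ξ, (H - H') ξ⟫ ≤ lam/2 * ‖ξ‖^2 := by
        have := (abs_le.mp c4).1
        nlinarith [sq_nonneg ‖ξ‖, hHH']
      have c6 : lam/2 * ‖ξ‖^2 ≤ ‖ξ‖ * ‖H ξ‖ := by nlinarith
      nlinarith [norm_nonneg (H ξ)]
  have hinj : Function.Injective H := by
    intro a b hab
    have hz : H (a - b) = 0 := by rw [map_sub, hab, sub_self]
    have := hlb (a - b)
    rw [hz, norm_zero] at this
    have hn : ‖a - b‖ = 0 := le_antisymm (by nlinarith [norm_nonneg (a - b)]) (norm_nonneg _)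
    exact sub_eq_zero.mp (norm_eq_zero.mp hn)
  have hsurj : Function.Surjective H :=
    (LinearMap.injective_iff_surjective (f := (H : E →ₗ[ℝ] E))).mp hinj
  let e : E ≃ₗ[ℝ] E := LinearEquiv.ofBijective (H : E →ₗ[ℝ] E) ⟨hinj, hsurj⟩
  let Hinv : E →L[ℝ] E := LinearMap.toContinuousLinearMap e.symm.toLinearMap
  have hinv1 : ∀ v, Hinv (H v) = v := fun v => e.symm_apply_apply v
  have hinv2 : ∀ v, H (Hinv v) = v := fun v => e.apply_symm_apply v
  have hbnd : ∀ v, ‖Hinv v‖ ≤ 2/lam * ‖v‖ := by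
    intro v
    have := hlb (Hinv v)
    rw [hinv2 v] at this
    rw [div_mul_eq_mul_div, le_div_iff₀ hlam]
    nlinarith
  refine ⟨Hinv, fun v => ⟨hinv1 v, hinv2 v⟩, ?_⟩
  have key : x - Hinv (G x) - xs = Hinv (G xs - G x - H (xs - x)) := by
    have hh : Hinv (H (xs - x)) = xs - x := hinv1 _
    have hsplit : Hinv (G xs - G x - H (xs - x))
        = Hinv (G xs) - Hinv (G x) - Hinv (H (xs - x)) := by
      simp [map_sub]
    rw [hsplit, hG0, map_zero, hh]
    abel
  calc ‖x - Hinv (G x) - xs‖ = ‖Hinv (G xs - G x - H (xs - x))‖ := by rw [key]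
    _ ≤ 2/lam * ‖G xs - G x - H (xs - x)‖ := hbnd _
    _ ≤ 2/lam * (1 * ‖xs - x‖ ^ (1 + μ)) :=
        mul_le_mul_of_nonneg_left (h2 x hx2 H hH) (by positivity)
    _ = 2/lam * ‖x - xs‖ ^ (1 + μ) := by rw [norm_sub_rev]; ring
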